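/- arXiv:cs/0205038 — 2 statements merged into one kernel-verified Lean document; each statement's English description precedes it below -/
import Mathlib

section
/- For all integers k and n with 1 ≤ k ≤ n−1, there is no c-competitive randomized online algorithm of type (k, n) with c < H_k: for every randomized online algorithm A of type (k,n), every real c < H_k, and every constant a, there exists a request sequence σ with E[C_A(σ)] > c·OPT(σ) + a. -/
/-!
Paging model: vertices are `Fin n`, configurations are `k`-element subsets of
`Fin n`.  `OPT` is the optimal offline cost and `expCost` the expected cost of a
randomized online algorithm (given by its transition kernel `RandAlg.step`),
starting from `{0,…,k−1}`; `harmonic k` (from Mathlib) is `H_k`.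

STATEMENT: For all integers `k` and `n` with `1 ≤ k ≤ n−1`, there is no
`c`-competitive randomized online algorithm of type `(k, n)` with `c < H_k`:
for every randomized online algorithm `A` of type `(k,n)`, every real `c < H_k`,
and every constant `a`, there exists a request sequence `σ` with
`E[C_A(σ)] > c·OPT(σ) + a`.
-/

open scoped ENNReal

/-- The initial configuration `{0, …, k−1}` as a subset of `Fin n`. -/
def initConf (k n : ℕ) : Finset (Fin n) :=
  Finset.univ.filter (fun v => (v : ℕ) < k)

/-- The cost of a sequence of configurations, starting from configuration `C`:
the sum over consecutive steps of the number of newly covered vertices. -/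
def listCost {n : ℕ} : Finset (Fin n) → List (Finset (Fin n)) → ℕ
  | _, [] => 0
  | C, D :: L => (D \ C).card + listCost D L

/-- `Cs` is a service of the request sequence `σ` by `k`-element configurations:
the `t`-th configuration covers the `t`-th request. -/
def Serves {n : ℕ} (k : ℕ) (σ : List (Fin n)) (Cs : List (Finset (Fin n))) : Prop :=
  List.Forall₂ (· ∈ ·) σ Cs ∧ ∀ C ∈ Cs, C.card = k

/-- The optimal offline cost of serving `σ`, starting from `{0,…,k−1}`. -/
noncomputable def OPT (k n : ℕ) (σ : List (Fin n)) : ℕ :=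
  sInf {m | ∃ Cs, Serves k σ Cs ∧ listCost (initConf k n) Cs = m}

/-- A (transition kernel of a) randomized online algorithm: given the request history,
the current configuration and a new request, produce a distribution over configurations. -/
abbrev Kernel (n : ℕ) := List (Fin n) → Finset (Fin n) → Fin n → PMF (Finset (Fin n))

/-- The distribution over configuration sequences induced by running kernel `K`
on request sequence `σ`, with history `hist` and current configuration `C`. -/
noncomputable def runFrom {n : ℕ} (K : Kernel n) :
    List (Fin n) → List (Fin n) → Finset (Fin n) → PMF (List (Finset (Fin n)))
  | [], _, _ => PMF.pure []
  | r :: rest, hist, C =>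
      (K hist C r).bind fun C' =>
        (runFrom K rest (hist ++ [r]) C').map fun L => C' :: L

/-- The distribution over configuration sequences induced by running kernel `K`
on request sequence `σ`, starting from the configuration `{0,…,k−1}`. -/
noncomputable def run {n : ℕ} (k : ℕ) (K : Kernel n) (σ : List (Fin n)) :
    PMF (List (Finset (Fin n))) :=
  runFrom K σ [] (initConf k n)

/-- The expected cost of the randomized online algorithm with kernel `K` on `σ`. -/
noncomputable def expCost {n : ℕ} (k : ℕ) (K : Kernel n) (σ : List (Fin n)) : ℝ :=
  ∑' Cs : List (Finset (Fin n)),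
    ((run k K σ) Cs).toReal * (listCost (initConf k n) Cs : ℝ)

/-- One step of the marking process: mark `r`; if `k+1` vertices are marked,
erase all marks except the one on `r`. -/
def markUpdate {n : ℕ} (k : ℕ) (M : Finset (Fin n)) (r : Fin n) : Finset (Fin n) :=
  if (insert r M).card = k + 1 then {r} else insert r M

/-- The set of marked vertices after processing the request sequence `σ`
(initially the vertices `{0,…,k−1}` are marked). -/
def marksAfter {n : ℕ} (k : ℕ) (σ : List (Fin n)) : Finset (Fin n) :=
  σ.foldl (markUpdate k) (initConf k n)

/-- The marking algorithm of type `(k,n)`: on a request `r`, first update the marks;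
if `r` is covered do nothing, and otherwise evict a uniformly random unmarked
covered vertex and move its server to `r`. -/
noncomputable def markingKernel (k n : ℕ) : Kernel n := fun hist C r =>
  let M := marksAfter k (hist ++ [r])
  if r ∈ C then PMF.pure C
  else if h : (C \ M).Nonempty then
    (PMF.uniformOfFinset (C \ M) h).map fun u => insert r (C.erase u)
  else PMF.pure (insert r (C.erase (if h2 : C.Nonempty then C.min' h2 else r)))

/-- A randomized online algorithm of type `(k,n)`: a transition kernel which,
from any `k`-element configuration, moves to a configuration that covers the
request and again has `k` elements. -/
structure RandAlg (k n : ℕ) where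
  step : Kernel n
  valid : ∀ (hist : List (Fin n)) (C : Finset (Fin n)) (r : Fin n), C.card = k →
    ∀ C' ∈ (step hist C r).support, r ∈ C' ∧ C'.card = k


/-! ### Auxiliary lemmas -/

section AuxBasic

lemma mem_initConf {m n : ℕ} {v : Fin n} : v ∈ initConf m n ↔ (v : ℕ) < m := by
  simp [initConf]

lemma card_initConf {m n : ℕ} (h : m ≤ n) : (initConf m n).card = m := by
  classical
  have : initConf m n =
      (Finset.univ : Finset (Fin m)).map ⟨Fin.castLE h, Fin.castLE_injective h⟩ := by
    ext v
    simp only [mem_initConf, Finset.mem_map, Finset.mem_univ, true_and,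
      Function.Embedding.coeFn_mk]
    constructor
    · intro hv; exact ⟨⟨v, hv⟩, by ext; simp [Fin.castLE]⟩
    · rintro ⟨w, rfl⟩; exact w.isLt
  rw [this, Finset.card_map, Finset.card_univ, Fintype.card_fin]

lemma harmonic_mono : Monotone harmonic := by
  intro a b hab
  induction b, hab using Nat.le_induction with
  | base => exact le_refl _
  | succ b hb ih =>
      exact le_trans ih (by rw [harmonic_succ]; exact le_add_of_nonneg_right (by positivity))

lemma harmonic_nonneg (m : ℕ) : 0 ≤ harmonic m := by
  cases m with
  | zero => simp [harmonic]
  | succ m => exact le_of_lt (harmonic_pos (Nat.succ_ne_zero m))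

lemma tsum_pure_mul {α : Type*} (a : α) (g : α → ℝ≥0∞) :
    ∑' x, (PMF.pure a) x * g x = g a := by
  rw [tsum_eq_single a]
  · simp [PMF.pure_apply]
  · intro b hb; simp [PMF.pure_apply, hb]

lemma tsum_bind_mul {α β : Type*} (p : PMF α) (f : α → PMF β) (g : β → ℝ≥0∞) :
    ∑' b, (p.bind f) b * g b = ∑' a, p a * ∑' b, (f a) b * g b := by
  calc ∑' b, (p.bind f) b * g b
      = ∑' b, ∑' a, p a * (f a) b * g b := by
        simp only [PMF.bind_apply]
        congr 1; funext b; rw [ENNReal.tsum_mul_right]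
    _ = ∑' a, ∑' b, p a * (f a) b * g b := ENNReal.tsum_comm
    _ = ∑' a, p a * ∑' b, (f a) b * g b := by
        congr 1; funext a; simp_rw [mul_assoc]; rw [ENNReal.tsum_mul_left]

lemma tsum_map_mul {α β : Type*} (p : PMF α) (f : α → β) (g : β → ℝ≥0∞) :
    ∑' b, (p.map f) b * g b = ∑' a, p a * g (f a) := by
  rw [PMF.map, tsum_bind_mul]
  congr 1; funext a
  rw [show ((PMF.pure ∘ f) a) = PMF.pure (f a) from rfl, tsum_pure_mul (f a) g]

end AuxBasic

/-! ### Expected cost in `ℝ≥0∞` -/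

section ECost

variable {n : ℕ}

noncomputable def eCostF (K : Kernel n) (σ hist : List (Fin n)) (C : Finset (Fin n)) : ℝ≥0∞ :=
  ∑' Cs, runFrom K σ hist C Cs * (listCost C Cs : ℝ≥0∞)

lemma eCostF_nil (K : Kernel n) (hist : List (Fin n)) (C : Finset (Fin n)) :
    eCostF K [] hist C = 0 := by
  rw [eCostF]
  have : ∀ Cs : List (Finset (Fin n)),
      runFrom K [] hist C Cs * (listCost C Cs : ℝ≥0∞) = 0 := by
    intro Cs
    cases Cs with
    | nil => simp [listCost]
    | cons D L =>
        have : runFrom K [] hist C (D :: L) = 0 := by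
          simp [runFrom, PMF.pure_apply]
        rw [this, zero_mul]
  simp only [this, tsum_zero]

lemma eCostF_cons (K : Kernel n) (r : Fin n) (σ hist : List (Fin n)) (C : Finset (Fin n)) :
    eCostF K (r :: σ) hist C =
      ∑' C', (K hist C r) C' *
        (((C' \ C).card : ℝ≥0∞) + eCostF K σ (hist ++ [r]) C') := by
  rw [eCostF]
  rw [show runFrom K (r :: σ) hist C =
    (K hist C r).bind fun C' => (runFrom K σ (hist ++ [r]) C').map fun L => C' :: L from rfl]
  rw [tsum_bind_mul]
  congr 1; funext C'
  rw [tsum_map_mul]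
  congr 1
  calc ∑' L, runFrom K σ (hist ++ [r]) C' L * (listCost C (C' :: L) : ℝ≥0∞)
      = ∑' L, (runFrom K σ (hist ++ [r]) C' L * ((C' \ C).card : ℝ≥0∞)
          + runFrom K σ (hist ++ [r]) C' L * (listCost C' L : ℝ≥0∞)) := by
        congr 1; funext L
        rw [show listCost C (C' :: L) = (C' \ C).card + listCost C' L from rfl]
        push_cast
        ring
    _ = ((C' \ C).card : ℝ≥0∞) + eCostF K σ (hist ++ [r]) C' := by
        rw [ENNReal.tsum_add, ENNReal.tsum_mul_right, PMF.tsum_coe, one_mul, eCostF]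

lemma runFrom_support_length (K : Kernel n) :
    ∀ (σ hist : List (Fin n)) (C : Finset (Fin n)) (Cs : List (Finset (Fin n))),
      Cs ∈ (runFrom K σ hist C).support → Cs.length = σ.length := by
  intro σ
  induction σ with
  | nil =>
      intro hist C Cs h
      rw [show runFrom K [] hist C = PMF.pure [] from rfl, PMF.support_pure] at h
      simp at h; simp [h]
  | cons r σ ih =>
      intro hist C Cs h
      rw [show runFrom K (r :: σ) hist C =
        (K hist C r).bind fun C' => (runFrom K σ (hist ++ [r]) C').map fun L => C' :: L from rfl,
        PMF.support_bind] at h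
      simp only [Set.mem_iUnion, PMF.support_map, Set.mem_image] at h
      obtain ⟨C', _, L, hL, rfl⟩ := h
      simp [ih (hist ++ [r]) C' L hL]

lemma listCost_le_card (C : Finset (Fin n)) (Cs : List (Finset (Fin n))) :
    listCost C Cs ≤ Cs.length * n := by
  induction Cs generalizing C with
  | nil => simp [listCost]
  | cons D L ih =>
      rw [show listCost C (D :: L) = (D \ C).card + listCost D L from rfl]
      have h1 : (D \ C).card ≤ n := by
        have := Finset.card_le_univ (D \ C)
        simpa using this
      calc (D \ C).card + listCost D L ≤ n + L.length * n := add_le_add h1 (ih D)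
        _ = (D :: L).length * n := by simp [List.length_cons]; ring

lemma eCostF_le (K : Kernel n) (σ hist : List (Fin n)) (C : Finset (Fin n)) :
    eCostF K σ hist C ≤ ((σ.length * n : ℕ) : ℝ≥0∞) := by
  rw [eCostF]
  calc ∑' Cs, runFrom K σ hist C Cs * (listCost C Cs : ℝ≥0∞)
      ≤ ∑' Cs, runFrom K σ hist C Cs * ((σ.length * n : ℕ) : ℝ≥0∞) := by
        apply ENNReal.tsum_le_tsum
        intro Cs
        by_cases h : Cs ∈ (runFrom K σ hist C).support
        · apply mul_le_mul_right
          have := listCost_le_card C Cs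
          rw [runFrom_support_length K σ hist C Cs h] at this
          exact_mod_cast Nat.cast_le.mpr this
        · rw [PMF.mem_support_iff, not_not] at h
          rw [h, zero_mul, zero_mul]
    _ = ((σ.length * n : ℕ) : ℝ≥0∞) := by
        rw [ENNReal.tsum_mul_right, PMF.tsum_coe, one_mul]

end ECost

/-! ### All request sequences of a given length -/

section AllSeqs

variable {α : Type*} [DecidableEq α]

def allSeqs (S : Finset α) : ℕ → Finset (List α)
  | 0 => {[]}
  | T + 1 => S.biUnion fun r => (allSeqs S T).image (r :: ·)

lemma sum_allSeqs_succ {M : Type*} [AddCommMonoid M] (S : Finset α) (T : ℕ) (g : List α → M) :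
    ∑ σ ∈ allSeqs S (T + 1), g σ = ∑ r ∈ S, ∑ σ ∈ allSeqs S T, g (r :: σ) := by
  rw [show allSeqs S (T + 1) = S.biUnion fun r => (allSeqs S T).image (r :: ·) from rfl]
  rw [Finset.sum_biUnion]
  · congr 1; funext r
    rw [Finset.sum_image]
    intro x _ y _ h
    exact (List.cons.injEq _ _ _ _ ▸ h).2
  · intro r1 h1 r2 h2 hne
    apply Finset.disjoint_left.mpr
    intro σ hσ1 hσ2
    simp only [Finset.mem_image] at hσ1 hσ2
    obtain ⟨x, _, rfl⟩ := hσ1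
    obtain ⟨y, _, hy⟩ := hσ2
    exact hne ((List.cons.injEq _ _ _ _ ▸ hy.symm).1)

lemma card_allSeqs (S : Finset α) (T : ℕ) : (allSeqs S T).card = S.card ^ T := by
  induction T with
  | zero => simp [allSeqs]
  | succ T ih =>
      have := sum_allSeqs_succ S T (fun _ => (1 : ℕ))
      simp only [Finset.sum_const, smul_eq_mul, mul_one] at this
      rw [this, ih, pow_succ]
      ring

lemma mem_allSeqs {S : Finset α} {T : ℕ} {σ : List α} (h : σ ∈ allSeqs S T) :
    ∀ r ∈ σ, r ∈ S := by
  induction T generalizing σ with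
  | zero => simp [allSeqs] at h; simp [h]
  | succ T ih =>
      simp only [allSeqs, Finset.mem_biUnion, Finset.mem_image] at h
      obtain ⟨r, hr, τ, hτ, rfl⟩ := h
      intro x hx
      rcases List.mem_cons.mp hx with rfl | hx
      · exact hr
      · exact ih hτ x hx

end AllSeqs

/-! ### Online lower bound -/

section Online

variable {k n : ℕ}

lemma tsum_finset_sum {β γ : Type*} (s : Finset γ) (f : γ → β → ℝ≥0∞) :
    ∑ i ∈ s, ∑' b, f i b = ∑' b, ∑ i ∈ s, f i b :=
  (Summable.tsum_finsetSum (fun _ _ => ENNReal.summable)).symm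

lemma online_lb (hn : k + 1 ≤ n) (K : Kernel n)
    (hval : ∀ (hist : List (Fin n)) (C : Finset (Fin n)) (r : Fin n), C.card = k →
      ∀ C' ∈ (K hist C r).support, r ∈ C' ∧ C'.card = k) :
    ∀ (T : ℕ) (hist : List (Fin n)) (C : Finset (Fin n)), C.card = k →
      (T : ℝ≥0∞) * ((k : ℝ≥0∞) + 1) ^ T ≤
        ((k : ℝ≥0∞) + 1) * ∑ σ ∈ allSeqs (initConf (k + 1) n) T, eCostF K σ hist C := by
  intro T
  induction T with
  | zero => intro hist C hC; simp
  | succ T ih =>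
      intro hist C hC
      have hNcard : (initConf (k + 1) n).card = k + 1 := card_initConf hn
      rw [sum_allSeqs_succ]
      set g1 : Fin n → ℝ≥0∞ := fun r =>
        ∑' C', (K hist C r) C' * (((k : ℝ≥0∞) + 1) ^ T * ((C' \ C).card : ℝ≥0∞)) with hg1def
      set g2 : Fin n → ℝ≥0∞ := fun r =>
        ∑' C', (K hist C r) C' * ∑ σ ∈ allSeqs (initConf (k + 1) n) T,
          eCostF K σ (hist ++ [r]) C' with hg2def
      have key : ∀ r : Fin n,
          ∑ σ ∈ allSeqs (initConf (k + 1) n) T, eCostF K (r :: σ) hist C = g1 r + g2 r := by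
        intro r
        simp only [eCostF_cons]
        rw [tsum_finset_sum]
        rw [hg1def, hg2def, ← ENNReal.tsum_add]
        congr 1; funext C'
        rw [← Finset.mul_sum, Finset.sum_add_distrib, Finset.sum_const, card_allSeqs, hNcard,
          nsmul_eq_mul, mul_add]
        congr 2
        push_cast
        ring
      simp only [key]
      -- bound the g2 terms using the induction hypothesis
      have hg2 : ∀ r : Fin n, (T : ℝ≥0∞) * ((k : ℝ≥0∞) + 1) ^ T ≤ ((k : ℝ≥0∞) + 1) * g2 r := by
        intro r
        have : ((k : ℝ≥0∞) + 1) * g2 r =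
            ∑' C', (K hist C r) C' * (((k : ℝ≥0∞) + 1) *
              ∑ σ ∈ allSeqs (initConf (k + 1) n) T, eCostF K σ (hist ++ [r]) C') := by
          rw [hg2def, ← ENNReal.tsum_mul_left]
          congr 1; funext C'
          ring
        rw [this]
        calc (T : ℝ≥0∞) * ((k : ℝ≥0∞) + 1) ^ T
            = ∑' C', (K hist C r) C' * ((T : ℝ≥0∞) * ((k : ℝ≥0∞) + 1) ^ T) := by
              rw [ENNReal.tsum_mul_right, PMF.tsum_coe, one_mul]
          _ ≤ _ := by
              apply ENNReal.tsum_le_tsum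
              intro C'
              by_cases hC' : C' ∈ (K hist C r).support
              · exact mul_le_mul_right (ih (hist ++ [r]) C' (hval hist C r hC C' hC').2) _
              · rw [PMF.mem_support_iff, not_not] at hC'
                rw [hC', zero_mul, zero_mul]
      -- there is a page outside C
      obtain ⟨r0, hr0N, hr0C⟩ : ∃ r0 ∈ initConf (k + 1) n, r0 ∉ C := by
        by_contra h
        push_neg at h
        have := Finset.card_le_card h
        omega
      -- the g1 term at r0 is at least (k+1)^T
      have hg1 : ((k : ℝ≥0∞) + 1) ^ T ≤ g1 r0 := by
        calc ((k : ℝ≥0∞) + 1) ^ T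
            = ∑' C', (K hist C r0) C' * (((k : ℝ≥0∞) + 1) ^ T * 1) := by
              rw [mul_one, ENNReal.tsum_mul_right, PMF.tsum_coe, one_mul]
          _ ≤ g1 r0 := by
              rw [hg1def]
              apply ENNReal.tsum_le_tsum
              intro C'
              by_cases hC' : C' ∈ (K hist C r0).support
              · apply mul_le_mul_right
                apply mul_le_mul_right
                have hmem : r0 ∈ C' \ C :=
                  Finset.mem_sdiff.mpr ⟨(hval hist C r0 hC C' hC').1, hr0C⟩
                have : 1 ≤ (C' \ C).card := Finset.card_pos.mpr ⟨r0, hmem⟩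
                exact_mod_cast Nat.one_le_cast.mpr this
              · rw [PMF.mem_support_iff, not_not] at hC'
                rw [hC', zero_mul, zero_mul]
      -- assemble
      calc ((T + 1 : ℕ) : ℝ≥0∞) * ((k : ℝ≥0∞) + 1) ^ (T + 1)
          = ((k : ℝ≥0∞) + 1) * ((k : ℝ≥0∞) + 1) ^ T
            + (((k : ℕ) + 1 : ℕ) : ℝ≥0∞) * ((T : ℝ≥0∞) * ((k : ℝ≥0∞) + 1) ^ T) := by
            push_cast
            ring
        _ ≤ ((k : ℝ≥0∞) + 1) * g1 r0
            + ∑ r ∈ initConf (k + 1) n, ((k : ℝ≥0∞) + 1) * g2 r := by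
            apply add_le_add
            · exact mul_le_mul_right hg1 _
            · calc (((k : ℕ) + 1 : ℕ) : ℝ≥0∞) * ((T : ℝ≥0∞) * ((k : ℝ≥0∞) + 1) ^ T)
                  = ∑ _r ∈ initConf (k + 1) n, (T : ℝ≥0∞) * ((k : ℝ≥0∞) + 1) ^ T := by
                    rw [Finset.sum_const, hNcard, nsmul_eq_mul]
                _ ≤ _ := Finset.sum_le_sum fun r _ => hg2 r
        _ ≤ ∑ r ∈ initConf (k + 1) n, ((k : ℝ≥0∞) + 1) * g1 r
            + ∑ r ∈ initConf (k + 1) n, ((k : ℝ≥0∞) + 1) * g2 r := by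
            apply add_le_add_left
            exact Finset.single_le_sum (f := fun r => ((k : ℝ≥0∞) + 1) * g1 r) (fun r _ => zero_le) hr0N
        _ = ((k : ℝ≥0∞) + 1) * ∑ r ∈ initConf (k + 1) n, (g1 r + g2 r) := by
            rw [← Finset.sum_add_distrib, Finset.mul_sum]
            congr 1; funext r
            ring

end Online

/-! ### Offline service construction -/

section Offline

variable {n : ℕ}

/-- Update of the set of not-yet-seen coupons. -/
def nextS (Npg S : Finset (Fin n)) (r : Fin n) : Finset (Fin n) :=
  if S = {r} then Npg.erase r else S.erase r

/-- Number of faults of the offline (longest-forward-distance) strategy. -/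
def fc (Npg : Finset (Fin n)) : Finset (Fin n) → List (Fin n) → ℕ
  | _, [] => 0
  | S, r :: σ => (if S = {r} then 1 else 0) + fc Npg (nextS Npg S r) σ

/-- The element of `S` whose first occurrence in `σ` is last (or never occurs). -/
def lastC (d : Fin n) : List (Fin n) → Finset (Fin n) → Fin n
  | [], S => if h : S.Nonempty then S.min' h else d
  | r :: σ, S => if S = {r} then r else lastC d σ (S.erase r)

/-- The offline service. -/
def serve (d : Fin n) (Npg : Finset (Fin n)) : List (Fin n) → Finset (Fin n) → List (Finset (Fin n))
  | [], _ => []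
  | r :: σ, S => (Npg \ {lastC d σ (nextS Npg S r)}) :: serve d Npg σ (nextS Npg S r)

lemma erase_nonempty_of_ne_singleton {S : Finset (Fin n)} {r : Fin n}
    (hS : S.Nonempty) (h : S ≠ {r}) : (S.erase r).Nonempty := by
  rw [Finset.nonempty_iff_ne_empty]
  intro hc
  rcases (Finset.erase_eq_empty_iff S r).mp hc with h1 | h1
  · exact (Finset.nonempty_iff_ne_empty.mp hS) h1
  · exact h h1

lemma nextS_subset {Npg S : Finset (Fin n)} (hS : S ⊆ Npg) (r : Fin n) :
    nextS Npg S r ⊆ Npg := by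
  rw [nextS]
  split_ifs
  · exact Finset.erase_subset _ _
  · exact le_trans (Finset.erase_subset _ _) hS

lemma nextS_nonempty {k : ℕ} (hk : 1 ≤ k) {Npg S : Finset (Fin n)} (hN : Npg.card = k + 1)
    (hSN : S ⊆ Npg) (hS : S.Nonempty) (r : Fin n) : (nextS Npg S r).Nonempty := by
  rw [nextS]
  split_ifs with h
  · have hr : r ∈ Npg := hSN (h ▸ Finset.mem_singleton_self r)
    rw [← Finset.card_pos, Finset.card_erase_of_mem hr, hN]
    omega
  · exact erase_nonempty_of_ne_singleton hS h

lemma not_mem_nextS {Npg S : Finset (Fin n)} (r : Fin n) : r ∉ nextS Npg S r := by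
  rw [nextS]; split_ifs <;> exact Finset.notMem_erase _ _

lemma lastC_mem (d : Fin n) : ∀ (σ : List (Fin n)) (S : Finset (Fin n)), S.Nonempty →
    lastC d σ S ∈ S := by
  intro σ
  induction σ with
  | nil => intro S hS; rw [lastC]; rw [dif_pos hS]; exact S.min'_mem hS
  | cons r σ ih =>
      intro S hS
      rw [lastC]
      split_ifs with h
      · exact h ▸ Finset.mem_singleton_self r
      · exact Finset.erase_subset _ _ (ih _ (erase_nonempty_of_ne_singleton hS h))

lemma serve_spec {k : ℕ} (hk : 1 ≤ k) (d : Fin n) (Npg : Finset (Fin n))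
    (hN : Npg.card = k + 1) :
    ∀ (σ : List (Fin n)) (S : Finset (Fin n)), (∀ r ∈ σ, r ∈ Npg) → S ⊆ Npg → S.Nonempty →
      List.Forall₂ (· ∈ ·) σ (serve d Npg σ S) ∧
      (∀ C ∈ serve d Npg σ S, C.card = k) ∧
      listCost (Npg \ {lastC d σ S}) (serve d Npg σ S) ≤ fc Npg S σ := by
  intro σ
  induction σ with
  | nil =>
      intro S _ _ _
      refine ⟨List.Forall₂.nil, by simp [serve], ?_⟩
      simp [serve, listCost]
  | cons r σ ih =>
      intro S hσ hSN hS
      have hrN : r ∈ Npg := hσ r List.mem_cons_self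
      have hS' : nextS Npg S r ⊆ Npg := nextS_subset hSN r
      have hS'ne : (nextS Npg S r).Nonempty := nextS_nonempty hk hN hSN hS r
      obtain ⟨ihF, ihCard, ihCost⟩ :=
        ih (nextS Npg S r) (fun x hx => hσ x (List.mem_cons_of_mem r hx)) hS' hS'ne
      set q' := lastC d σ (nextS Npg S r) with hq'
      have hq'mem : q' ∈ nextS Npg S r := lastC_mem d σ _ hS'ne
      have hq'N : q' ∈ Npg := hS' hq'mem
      have hrne : r ≠ q' := by
        intro h
        rw [← h] at hq'mem
        exact not_mem_nextS r hq'mem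
      have hserve : serve d Npg (r :: σ) S =
          (Npg \ {q'}) :: serve d Npg σ (nextS Npg S r) := rfl
      refine ⟨?_, ?_, ?_⟩
      · rw [hserve]
        exact List.Forall₂.cons (Finset.mem_sdiff.mpr ⟨hrN,
          fun h => hrne (Finset.mem_singleton.mp h)⟩) ihF
      · rw [hserve]
        intro C hC
        rcases List.mem_cons.mp hC with rfl | hC
        · rw [Finset.card_sdiff_of_subset (Finset.singleton_subset_iff.mpr hq'N), hN,
            Finset.card_singleton]
          omega
        · exact ihCard C hC
      · rw [hserve]
        rw [show listCost (Npg \ {lastC d (r :: σ) S}) ((Npg \ {q'}) :: serve d Npg σ (nextS Npg S r))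
          = ((Npg \ {q'}) \ (Npg \ {lastC d (r :: σ) S})).card
            + listCost (Npg \ {q'}) (serve d Npg σ (nextS Npg S r)) from rfl]
        rw [show fc Npg S (r :: σ) = (if S = {r} then 1 else 0) + fc Npg (nextS Npg S r) σ from rfl]
        apply add_le_add _ ihCost
        by_cases h : S = {r}
        · rw [if_pos h]
          have hsub : (Npg \ {q'}) \ (Npg \ {lastC d (r :: σ) S}) ⊆ {r} := by
            intro x hx
            rw [lastC, if_pos h] at hx
            simp only [Finset.mem_sdiff, Finset.mem_singleton, not_and, not_not] at hx
            exact Finset.mem_singleton.mpr (hx.2 hx.1.1)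
          calc _ ≤ ({r} : Finset (Fin n)).card := Finset.card_le_card hsub
            _ = 1 := Finset.card_singleton r
        · rw [if_neg h]
          have : lastC d (r :: σ) S = q' := by
            rw [lastC, if_neg h, hq']
            congr 1
            rw [nextS, if_neg h]
          rw [this]
          simp

lemma opt_le {k : ℕ} (hk : 1 ≤ k) (hn : k + 1 ≤ n) (σ : List (Fin n))
    (hσ : ∀ r ∈ σ, r ∈ initConf (k + 1) n) :
    OPT k n σ ≤ fc (initConf (k + 1) n) (initConf k n) σ + 1 := by
  have hd : (0 : ℕ) < n := by omega
  set d : Fin n := ⟨0, hd⟩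
  set Npg := initConf (k + 1) n with hNpg
  have hN : Npg.card = k + 1 := card_initConf hn
  have hS0 : initConf k n ⊆ Npg := by
    intro x hx; rw [hNpg, mem_initConf]; exact lt_trans (mem_initConf.mp hx) (Nat.lt_succ_self k)
  have hS0ne : (initConf k n).Nonempty := by
    rw [← Finset.card_pos, card_initConf (by omega : k ≤ n)]; omega
  obtain ⟨hF, hCard, hCost⟩ := serve_spec hk d Npg hN σ (initConf k n) hσ hS0 hS0ne
  -- the initial extra cost is at most 1
  have hstart : listCost (initConf k n) (serve d Npg σ (initConf k n)) ≤
      fc Npg (initConf k n) σ + 1 := by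
    cases σ with
    | nil => simp [serve, listCost]
    | cons r τ =>
        set S' := nextS Npg (initConf k n) r
        set q' := lastC d τ S'
        have hserve : serve d Npg (r :: τ) (initConf k n) =
            (Npg \ {q'}) :: serve d Npg τ S' := rfl
        rw [hserve] at hCost ⊢
        rw [show listCost (initConf k n) ((Npg \ {q'}) :: serve d Npg τ S')
          = ((Npg \ {q'}) \ initConf k n).card + listCost (Npg \ {q'}) (serve d Npg τ S')
          from rfl]
        have h1 : ((Npg \ {q'}) \ initConf k n).card ≤ 1 := by
          have hsub : (Npg \ {q'}) \ initConf k n ⊆ {(⟨k, by omega⟩ : Fin n)} := by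
            intro x hx
            simp only [Finset.mem_sdiff, hNpg, mem_initConf] at hx
            have : (x : ℕ) = k := by omega
            simp only [Finset.mem_singleton]
            exact Fin.ext this
          calc _ ≤ ({(⟨k, by omega⟩ : Fin n)} : Finset (Fin n)).card := Finset.card_le_card hsub
            _ = 1 := Finset.card_singleton _
        have h2 : listCost (Npg \ {q'}) (serve d Npg τ S') ≤ fc Npg (initConf k n) (r :: τ) := by
          refine le_trans ?_ hCost
          rw [show listCost (Npg \ {lastC d (r :: τ) (initConf k n)})
            ((Npg \ {q'}) :: serve d Npg τ S')
            = ((Npg \ {q'}) \ (Npg \ {lastC d (r :: τ) (initConf k n)})).card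
              + listCost (Npg \ {q'}) (serve d Npg τ S') from rfl]
          omega
        omega
  -- conclude via the definition of OPT
  have hmem : listCost (initConf k n) (serve d Npg σ (initConf k n)) ∈
      {m | ∃ Cs, Serves k σ Cs ∧ listCost (initConf k n) Cs = m} :=
    ⟨serve d Npg σ (initConf k n), ⟨hF, hCard⟩, rfl⟩
  exact le_trans (Nat.sInf_le hmem) hstart

end Offline

/-! ### Average number of faults: coupon-collector potential -/

section Potential

variable {n : ℕ}

lemma harmonic_one_real : ((harmonic 1 : ℚ) : ℝ) = 1 := by
  have := harmonic_succ 0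
  rw [harmonic_zero] at this
  rw [this]
  norm_num

lemma nextS_card_le {k : ℕ} {Npg S : Finset (Fin n)} (hN : Npg.card = k + 1)
    (hSN : S ⊆ Npg) (hSk : S.card ≤ k) (r : Fin n) : (nextS Npg S r).card ≤ k := by
  rw [nextS]
  split_ifs with h
  · have hr : r ∈ Npg := hSN (h ▸ Finset.mem_singleton_self r)
    rw [Finset.card_erase_of_mem hr, hN]
    omega
  · exact le_trans Finset.card_erase_le hSk

lemma key_arith {k : ℕ} (hk : 1 ≤ k) (Npg S : Finset (Fin n)) (hN : Npg.card = k + 1)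
    (hSN : S ⊆ Npg) (hSne : S.Nonempty) (hSk : S.card ≤ k) (Tr : ℝ) :
    ∑ r ∈ Npg, ((if S = {r} then (1 : ℝ) else 0) * (((k : ℝ) + 1) * (harmonic k : ℝ))
        + (Tr + ((k : ℝ) + 1) * ((harmonic k : ℝ) - (harmonic (nextS Npg S r).card : ℝ)))) ≤
      ((k : ℝ) + 1) * ((Tr + 1) + ((k : ℝ) + 1) * ((harmonic k : ℝ) - (harmonic S.card : ℝ))) := by
  set H : ℝ := (harmonic k : ℝ) with hH
  set J : ℝ := ∑ r ∈ Npg, (harmonic (nextS Npg S r).card : ℝ) with hJ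
  have hsum2 : ∑ r ∈ Npg, (Tr + ((k : ℝ) + 1) * (H - (harmonic (nextS Npg S r).card : ℝ)))
      = ((k : ℝ) + 1) * Tr + ((k : ℝ) + 1) * (((k : ℝ) + 1) * H) - ((k : ℝ) + 1) * J := by
    rw [Finset.sum_add_distrib, Finset.sum_const, hN, ← Finset.mul_sum,
      Finset.sum_sub_distrib, Finset.sum_const, hN, hJ]
    push_cast [nsmul_eq_mul]
    ring
  rw [Finset.sum_add_distrib, hsum2]
  rcases Nat.lt_or_ge S.card 2 with hcard | hcard
  · -- `S` is a singleton
    have hc1 : S.card = 1 := by have := Finset.card_pos.mpr hSne; omega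
    obtain ⟨s, rfl⟩ := Finset.card_eq_one.mp hc1
    have hsN : s ∈ Npg := hSN (Finset.mem_singleton_self s)
    have hSA : ∑ r ∈ Npg, (if ({s} : Finset (Fin n)) = {r} then (1 : ℝ) else 0)
        * (((k : ℝ) + 1) * H) = ((k : ℝ) + 1) * H := by
      simp only [ite_mul, one_mul, zero_mul, Finset.singleton_inj]
      rw [Finset.sum_ite_eq Npg s (fun _ => ((k : ℝ) + 1) * H), if_pos hsN]
    have hJval : J = H + (k : ℝ) := by
      rw [hJ, ← Finset.add_sum_erase Npg _ hsN]
      have h1 : nextS Npg {s} s = Npg.erase s := by rw [nextS, if_pos rfl]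
      have h2 : ∀ r ∈ Npg.erase s, (harmonic (nextS Npg ({s} : Finset (Fin n)) r).card : ℝ)
          = 1 := by
        intro r hr
        have hrs : r ≠ s := Finset.ne_of_mem_erase hr
        have : nextS Npg {s} r = {s} := by
          rw [nextS, if_neg (fun h => hrs (Finset.singleton_inj.mp h).symm),
            Finset.erase_eq_of_notMem (by simp [hrs])]
        rw [this, Finset.card_singleton, harmonic_one_real]
      rw [Finset.sum_congr rfl h2, Finset.sum_const,
        Finset.card_erase_of_mem hsN, hN, h1, Finset.card_erase_of_mem hsN, hN]
      simp only [Nat.add_sub_cancel, nsmul_eq_mul, mul_one]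
      rfl
    rw [hSA, hJval, Finset.card_singleton, harmonic_one_real]
    apply le_of_eq
    ring
  · -- `S` has at least two elements
    obtain ⟨m, hm⟩ : ∃ m, S.card = m + 1 := ⟨S.card - 1, by omega⟩
    have hm1 : 1 ≤ m := by omega
    have hmk : m ≤ k := by omega
    have hnotS : ∀ r : Fin n, S ≠ {r} := by
      intro r h
      rw [h, Finset.card_singleton] at hcard
      omega
    have hSA : ∑ r ∈ Npg, (if S = {r} then (1 : ℝ) else 0) * (((k : ℝ) + 1) * H) = 0 :=
      Finset.sum_eq_zero fun r _ => by rw [if_neg (hnotS r), zero_mul]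
    have hJval : J = ((k : ℝ) - m) * (harmonic (m + 1) : ℝ) + ((m : ℝ) + 1) * (harmonic m : ℝ) := by
      rw [hJ, ← Finset.sum_sdiff hSN]
      have h1 : ∀ r ∈ Npg \ S, (harmonic (nextS Npg S r).card : ℝ) = (harmonic (m + 1) : ℝ) := by
        intro r hr
        have hrS : r ∉ S := (Finset.mem_sdiff.mp hr).2
        rw [nextS, if_neg (hnotS r), Finset.erase_eq_of_notMem hrS, hm]
      have h2 : ∀ r ∈ S, (harmonic (nextS Npg S r).card : ℝ) = (harmonic m : ℝ) := by
        intro r hr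
        rw [nextS, if_neg (hnotS r), Finset.card_erase_of_mem hr, hm]
        simp
      rw [Finset.sum_congr rfl h1, Finset.sum_congr rfl h2, Finset.sum_const, Finset.sum_const,
        Finset.card_sdiff_of_subset hSN, hN, hm]
      have : k + 1 - (m + 1) = k - m := by omega
      rw [this]
      push_cast [nsmul_eq_mul, Nat.cast_sub hmk]
      ring
    have hstep : (harmonic (m + 1) : ℝ) = (harmonic m : ℝ) + ((m : ℝ) + 1)⁻¹ := by
      have := harmonic_succ m
      push_cast [this]
      norm_num
    have hinv : ((m : ℝ) + 1) * ((m : ℝ) + 1)⁻¹ = 1 := by field_simp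
    rw [hSA, hJval, hm]
    apply le_of_eq
    linear_combination (((k : ℝ) + 1) * ((m : ℝ) + 1)) * hstep + ((k : ℝ) + 1) * hinv

lemma fc_avg {k : ℕ} (hk : 1 ≤ k) (Npg : Finset (Fin n)) (hN : Npg.card = k + 1) :
    ∀ (T : ℕ) (S : Finset (Fin n)), S ⊆ Npg → S.Nonempty → S.card ≤ k →
      (∑ σ ∈ allSeqs Npg T, (fc Npg S σ : ℝ)) * (((k : ℝ) + 1) * (harmonic k : ℝ)) ≤
        ((k : ℝ) + 1) ^ T *
          ((T : ℝ) + ((k : ℝ) + 1) * ((harmonic k : ℝ) - (harmonic S.card : ℝ))) := by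
  intro T
  induction T with
  | zero =>
      intro S hSN hSne hSk
      rw [show allSeqs Npg 0 = {[]} from rfl, Finset.sum_singleton,
        show fc Npg S [] = 0 from rfl]
      have h1 : (harmonic S.card : ℝ) ≤ (harmonic k : ℝ) := by
        exact_mod_cast harmonic_mono hSk
      have h2 : (0 : ℝ) ≤ (k : ℝ) + 1 := by positivity
      simp only [Nat.cast_zero, zero_mul, pow_zero, one_mul, Nat.cast_ofNat]
      nlinarith
  | succ T ih =>
      intro S hSN hSne hSk
      have hfc : ∀ (r : Fin n) (σ : List (Fin n)),
          (fc Npg S (r :: σ) : ℝ) = (if S = {r} then (1 : ℝ) else 0)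
            + (fc Npg (nextS Npg S r) σ : ℝ) := by
        intro r σ
        rw [show fc Npg S (r :: σ) = (if S = {r} then 1 else 0) + fc Npg (nextS Npg S r) σ
          from rfl]
        push_cast [apply_ite (fun (m : ℕ) => (m : ℝ))]
        ring
      have hsplit : ∑ σ ∈ allSeqs Npg (T + 1), (fc Npg S σ : ℝ)
          = ∑ r ∈ Npg, (((k : ℝ) + 1) ^ T * (if S = {r} then (1 : ℝ) else 0)
              + ∑ σ ∈ allSeqs Npg T, (fc Npg (nextS Npg S r) σ : ℝ)) := by
        rw [sum_allSeqs_succ]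
        refine Finset.sum_congr rfl fun r _ => ?_
        simp only [hfc]
        rw [Finset.sum_add_distrib, Finset.sum_const, card_allSeqs, hN, nsmul_eq_mul]
        push_cast
        ring
      rw [hsplit, Finset.sum_mul]
      calc ∑ r ∈ Npg, ((((k : ℝ) + 1) ^ T * (if S = {r} then (1 : ℝ) else 0)
              + ∑ σ ∈ allSeqs Npg T, (fc Npg (nextS Npg S r) σ : ℝ))
            * (((k : ℝ) + 1) * (harmonic k : ℝ)))
          ≤ ∑ r ∈ Npg, (((k : ℝ) + 1) ^ T *
              ((if S = {r} then (1 : ℝ) else 0) * (((k : ℝ) + 1) * (harmonic k : ℝ))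
                + ((T : ℝ) + ((k : ℝ) + 1) * ((harmonic k : ℝ)
                    - (harmonic (nextS Npg S r).card : ℝ))))) := by
            refine Finset.sum_le_sum fun r _ => ?_
            rw [add_mul, mul_add]
            apply add_le_add (le_of_eq (by ring))
            have := ih (nextS Npg S r) (nextS_subset hSN r)
              (nextS_nonempty hk hN hSN hSne r) (nextS_card_le hN hSN hSk r)
            linarith
        _ = ((k : ℝ) + 1) ^ T * ∑ r ∈ Npg,
              ((if S = {r} then (1 : ℝ) else 0) * (((k : ℝ) + 1) * (harmonic k : ℝ))
                + ((T : ℝ) + ((k : ℝ) + 1) * ((harmonic k : ℝ)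
                    - (harmonic (nextS Npg S r).card : ℝ)))) := by
            rw [Finset.mul_sum]
        _ ≤ ((k : ℝ) + 1) ^ T * (((k : ℝ) + 1) * (((T : ℝ) + 1)
              + ((k : ℝ) + 1) * ((harmonic k : ℝ) - (harmonic S.card : ℝ)))) := by
            apply mul_le_mul_of_nonneg_left _ (by positivity)
            exact key_arith hk Npg S hN hSN hSne hSk (T : ℝ)
        _ = ((k : ℝ) + 1) ^ (T + 1) *
              (((T + 1 : ℕ) : ℝ) + ((k : ℝ) + 1) * ((harmonic k : ℝ) - (harmonic S.card : ℝ))) := by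
            push_cast
            ring

end Potential

/-! ### Putting everything together -/

lemma expCost_eq_toReal {n : ℕ} (k : ℕ) (K : Kernel n) (σ : List (Fin n)) :
    expCost k K σ = (eCostF K σ [] (initConf k n)).toReal := by
  rw [expCost, eCostF, ENNReal.tsum_toReal_eq
    (fun Cs => ENNReal.mul_ne_top (PMF.apply_ne_top _ _) (ENNReal.natCast_ne_top _))]
  congr 1; funext Cs
  rw [ENNReal.toReal_mul, show ∀ m : ℕ, ((m : ℝ≥0∞)).toReal = m from fun _ => rfl]
  rfl


/-- No randomized online algorithm of type `(k, n)`, `1 ≤ k ≤ n−1`, is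
`c`-competitive for `c < H_k`. -/
theorem no_randomized_better_than_Hk (k n : ℕ) (hk : 1 ≤ k) (hkn : k ≤ n - 1)
    (A : RandAlg k n) (c : ℝ) (hc : c < (harmonic k : ℝ)) (a : ℝ) :
    ∃ σ : List (Fin n),
      c * (OPT k n σ : ℝ) + a < expCost k A.step σ := by

  classical
  have hn : k + 1 ≤ n := by omega
  have hkn' : k ≤ n := by omega
  set Npg := initConf (k + 1) n with hNpg
  have hN : Npg.card = k + 1 := card_initConf hn
  set H : ℝ := (harmonic k : ℝ) with hHdef
  have hH : 0 < H := by
    rw [hHdef]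
    exact_mod_cast harmonic_pos (by omega : k ≠ 0)
  set c' : ℝ := max c 0 with hc'def
  have hc'0 : 0 ≤ c' := le_max_right c 0
  have hcc' : c ≤ c' := le_max_left c 0
  have hc' : c' < H := max_lt hc hH
  have hsub : 0 < H - c' := sub_pos.mpr hc'
  set K1 : ℝ := (k : ℝ) + 1 with hK1def
  have hK10 : 0 < K1 := by rw [hK1def]; positivity
  by_contra hcon
  push_neg at hcon
  -- choose the horizon T
  obtain ⟨T, hTgt⟩ := exists_nat_gt (K1 * H * (c' + a) / (H - c'))
  have hT' : K1 * H * (c' + a) < (T : ℝ) * (H - c') := (div_lt_iff₀ hsub).mp hTgt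
  set P : ℝ := K1 ^ T with hPdef
  have hP : 0 < P := by rw [hPdef]; positivity
  set E : ℝ := ∑ σ ∈ allSeqs Npg T, expCost k A.step σ with hEdef
  set F : ℝ := ∑ σ ∈ allSeqs Npg T, (fc Npg (initConf k n) σ : ℝ) with hFdef
  set O : ℝ := ∑ σ ∈ allSeqs Npg T, (OPT k n σ : ℝ) with hOdef
  -- (1) online lower bound, transferred to ℝ
  have h1 : (T : ℝ) * P ≤ K1 * E := by
    have h1e := online_lb hn A.step A.valid T [] (initConf k n) (card_initConf hkn')
    have hfin : ∀ σ ∈ allSeqs Npg T, eCostF A.step σ [] (initConf k n) ≠ ⊤ :=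
      fun σ _ => ne_top_of_le_ne_top (ENNReal.natCast_ne_top _) (eCostF_le _ _ _ _)
    have hsumfin : ∑ σ ∈ allSeqs Npg T, eCostF A.step σ [] (initConf k n) ≠ ⊤ := by
      rw [← lt_top_iff_ne_top]
      exact ENNReal.sum_lt_top.mpr fun σ hσ => lt_top_iff_ne_top.mpr (hfin σ hσ)
    have hcast : ((k : ℝ≥0∞) + 1) = ((k + 1 : ℕ) : ℝ≥0∞) := by push_cast; ring
    rw [hcast] at h1e
    have hRne : ((k + 1 : ℕ) : ℝ≥0∞) * ∑ σ ∈ allSeqs Npg T, eCostF A.step σ [] (initConf k n)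
        ≠ ⊤ := ENNReal.mul_ne_top (ENNReal.natCast_ne_top _) hsumfin
    have h2r := ENNReal.toReal_mono hRne h1e
    rw [ENNReal.toReal_mul, ENNReal.toReal_mul, ENNReal.toReal_pow,
      show ∀ m : ℕ, ((m : ℝ≥0∞)).toReal = m from fun _ => rfl,
      show ∀ m : ℕ, ((m : ℝ≥0∞)).toReal = m from fun _ => rfl,
      ENNReal.toReal_sum hfin] at h2r
    have hrw : ∑ σ ∈ allSeqs Npg T, (eCostF A.step σ [] (initConf k n)).toReal = E := by
      rw [hEdef]
      exact Finset.sum_congr rfl fun σ _ => (expCost_eq_toReal k A.step σ).symm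
    rw [hrw] at h2r
    have : ((k + 1 : ℕ) : ℝ) = K1 := by rw [hK1def]; push_cast; ring
    rw [this] at h2r
    calc (T : ℝ) * P = (T : ℝ) * K1 ^ T := by rw [hPdef]
      _ ≤ K1 * E := h2r
  -- (2) OPT is at most the number of faults plus one
  have h2 : O ≤ F + P := by
    rw [hOdef, hFdef]
    calc ∑ σ ∈ allSeqs Npg T, (OPT k n σ : ℝ)
        ≤ ∑ σ ∈ allSeqs Npg T, ((fc Npg (initConf k n) σ : ℝ) + 1) := by
          refine Finset.sum_le_sum fun σ hσ => ?_
          have := opt_le hk hn σ (mem_allSeqs hσ)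
          push_cast
          exact_mod_cast this
      _ = (∑ σ ∈ allSeqs Npg T, (fc Npg (initConf k n) σ : ℝ)) + P := by
        rw [Finset.sum_add_distrib, Finset.sum_const, card_allSeqs, hN, nsmul_eq_mul, mul_one,
          hPdef, hK1def]
        push_cast
        ring
  -- (3) the potential bound on the expected number of faults
  have h3 : F * (K1 * H) ≤ P * T := by
    have hS0N : initConf k n ⊆ Npg := by
      intro x hx
      rw [hNpg, mem_initConf]
      exact lt_trans (mem_initConf.mp hx) (Nat.lt_succ_self k)
    have hS0ne : (initConf k n).Nonempty := by
      rw [← Finset.card_pos, card_initConf hkn']; omega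
    have hS0k : (initConf k n).card ≤ k := le_of_eq (card_initConf hkn')
    have := fc_avg hk Npg hN T (initConf k n) hS0N hS0ne hS0k
    rw [card_initConf hkn'] at this
    calc F * (K1 * H) ≤ K1 ^ T * ((T : ℝ) + K1 * (H - H)) := this
      _ = P * T := by rw [hPdef]; ring
  -- (4) the competitiveness assumption, summed
  have h4 : E ≤ c' * O + P * a := by
    rw [hEdef, hOdef]
    calc ∑ σ ∈ allSeqs Npg T, expCost k A.step σ
        ≤ ∑ σ ∈ allSeqs Npg T, (c' * (OPT k n σ : ℝ) + a) := by
          refine Finset.sum_le_sum fun σ _ => ?_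
          have h5 := hcon σ
          have h6 : c * (OPT k n σ : ℝ) ≤ c' * (OPT k n σ : ℝ) :=
            mul_le_mul_of_nonneg_right hcc' (Nat.cast_nonneg _)
          linarith
      _ = c' * ∑ σ ∈ allSeqs Npg T, (OPT k n σ : ℝ) + P * a := by
        rw [Finset.sum_add_distrib, Finset.sum_const, card_allSeqs, hN, nsmul_eq_mul,
          ← Finset.mul_sum, hPdef, hK1def]
        push_cast
        ring
  -- numeric contradiction
  have hEO : E ≤ c' * (F + P) + P * a := by
    have := mul_le_mul_of_nonneg_left h2 hc'0
    linarith
  have e1 : (T : ℝ) * P * H ≤ K1 * (c' * (F + P) + P * a) * H := by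
    have := mul_le_mul_of_nonneg_left hEO (le_of_lt hK10)
    have := mul_le_mul_of_nonneg_right (le_trans h1 this) (le_of_lt hH)
    linarith
  have e2 : c' * (F * (K1 * H)) ≤ c' * (P * T) := mul_le_mul_of_nonneg_left h3 hc'0
  have e3 : P * ((T : ℝ) * (H - c')) ≤ P * (K1 * H * (c' + a)) := by nlinarith [e1, e2]
  have e4 : (T : ℝ) * (H - c') ≤ K1 * H * (c' + a) := le_of_mul_le_mul_left e3 hP
  linarith
end

section
/- Let c(1),…,c(m) be positive reals with Σ_{i=1}^m 1/c(i) ≤ 1. Then for every type (k,n) with 1 ≤ k < n and all deterministic online algorithms B(1),…,B(m) of type (k,n), there exists a deterministic online algorithm A of type (k,n) such that for each i ∈ {1,…,m}, A is c(i)-competitive against B(i): there is a constant a(i) with C_A(σ) ≤ c(i)·C_{B(i)}(σ) + a(i) for every request sequence σ. -/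
/-- A deterministic online algorithm of type `(k,n)`: a map from request
histories to `k`-element configurations, such that after any request the
configuration covers that request. -/
structure DetAlg (k n : ℕ) where
  conf : List (Fin n) → Finset (Fin n)
  card_eq : ∀ l : List (Fin n), (conf l).card = k
  mem_last : ∀ (l : List (Fin n)) (r : Fin n), r ∈ conf (l ++ [r])

/-- The configuration of `A` after the first `t` requests of `σ`
(the configuration at time `0` is `{0,…,k−1}`). -/
def detConfAt {k n : ℕ} (A : DetAlg k n) (σ : List (Fin n)) (t : ℕ) : Finset (Fin n) :=
  if t = 0 then initConf k n else A.conf (σ.take t)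

/-- The cost incurred by the deterministic online algorithm `A` on the request
sequence `σ`. -/
def detCost {k n : ℕ} (A : DetAlg k n) (σ : List (Fin n)) : ℕ :=
  ∑ t ∈ Finset.range σ.length, (detConfAt A σ (t + 1) \ detConfAt A σ t).card

open Finset

lemma initConf_card {k n : ℕ} (h : k ≤ n) : (initConf k n).card = k := by
  have : initConf k n = Finset.univ.map (Fin.castLEEmb h) := by
    ext v
    simp only [initConf, mem_filter, mem_univ, true_and, mem_map, Fin.castLEEmb]
    constructor
    · intro hv
      exact ⟨⟨v, hv⟩, rfl⟩
    · rintro ⟨u, rfl⟩; simp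
  rw [this, card_map, card_univ, Fintype.card_fin]

variable {m k n : ℕ}

/-- index minimizing `c i * cost of B i on l`. -/
noncomputable def combPick (c : Fin m → ℝ) (B : Fin m → DetAlg k n)
    (l : List (Fin n)) (hm : 0 < m) : Fin m :=
  haveI : Nonempty (Fin m) := ⟨⟨0, hm⟩⟩
  Classical.choose (Finite.exists_min fun i => c i * (detCost (B i) l : ℝ))

lemma combPick_min (c : Fin m → ℝ) (B : Fin m → DetAlg k n)
    (l : List (Fin n)) (hm : 0 < m) (j : Fin m) :
    c (combPick c B l hm) * (detCost (B (combPick c B l hm)) l : ℝ)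
      ≤ c j * (detCost (B j) l : ℝ) :=
  haveI : Nonempty (Fin m) := ⟨⟨0, hm⟩⟩
  Classical.choose_spec (Finite.exists_min fun i => c i * (detCost (B i) l : ℝ)) j

/-- the page evicted on a fault. -/
noncomputable def combVictim (c : Fin m → ℝ) (B : Fin m → DetAlg k n)
    (C : Finset (Fin n)) (l : List (Fin n)) (p : Fin n) : Fin n :=
  let T : Finset (Fin n) := if h : 0 < m then (B (combPick c B l h)).conf l else ∅
  if hS : (C \ T).Nonempty then (C \ T).min' hS
  else if hC : C.Nonempty then C.min' hC else p

/-- the combined algorithm's configuration; the input list is the request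
history in reverse order. -/
noncomputable def combRaw (c : Fin m → ℝ) (B : Fin m → DetAlg k n) :
    List (Fin n) → Finset (Fin n)
  | [] => initConf k n
  | p :: rest =>
      let C := combRaw c B rest
      if p ∈ C then C
      else insert p (C.erase (combVictim c B C ((p :: rest).reverse) p))

lemma combVictim_mem (c : Fin m → ℝ) (B : Fin m → DetAlg k n)
    (C : Finset (Fin n)) (l : List (Fin n)) (p : Fin n) (hC : C.Nonempty) :
    combVictim c B C l p ∈ C := by
  simp only [combVictim]
  set T := (if h : 0 < m then (B (combPick c B l h)).conf l else (∅ : Finset (Fin n)))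
  by_cases hS : (C \ T).Nonempty
  · rw [dif_pos hS]; exact (mem_sdiff.mp ((C \ T).min'_mem hS)).1
  · rw [dif_neg hS, dif_pos hC]; exact C.min'_mem hC

lemma combVictim_not_mem (c : Fin m → ℝ) (B : Fin m → DetAlg k n)
    (C : Finset (Fin n)) (l : List (Fin n)) (p : Fin n) (hm : 0 < m)
    (hCk : C.card = k) (hp : p ∉ C) (hpT : p ∈ (B (combPick c B l hm)).conf l) :
    combVictim c B C l p ∉ (B (combPick c B l hm)).conf l := by
  have hT : (if h : 0 < m then (B (combPick c B l h)).conf l else ∅)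
      = (B (combPick c B l hm)).conf l := dif_pos hm
  have hS : (C \ (B (combPick c B l hm)).conf l).Nonempty := by
    rw [← card_pos]
    by_contra h
    push_neg at h
    interval_cases hc : (C \ (B (combPick c B l hm)).conf l).card
    have hsub : C ⊆ (B (combPick c B l hm)).conf l :=
      sdiff_eq_empty_iff_subset.mp (card_eq_zero.mp hc)
    have := eq_of_subset_of_card_le hsub
      (le_of_eq (((B (combPick c B l hm)).card_eq l).trans hCk.symm))
    exact hp (this ▸ hpT)
  simp only [combVictim]
  rw [hT, dif_pos hS]
  exact (mem_sdiff.mp ((C \ _).min'_mem hS)).2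

lemma combRaw_card (c : Fin m → ℝ) (B : Fin m → DetAlg k n)
    (hk : 1 ≤ k) (hkn : k ≤ n) : ∀ rl : List (Fin n), (combRaw c B rl).card = k := by
  intro rl
  induction rl with
  | nil => exact initConf_card hkn
  | cons p rest ih =>
    rw [combRaw]
    split
    · exact ih
    · next hp =>
      have hCne : (combRaw c B rest).Nonempty := by
        rw [← card_pos, ih]; omega
      have hq := combVictim_mem c B (combRaw c B rest) ((p :: rest).reverse) p hCne
      rw [card_insert_of_notMem (fun h => hp (mem_of_mem_erase h)),
        card_erase_of_mem hq, ih]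
      omega

lemma combRaw_mem (c : Fin m → ℝ) (B : Fin m → DetAlg k n)
    (rest : List (Fin n)) (p : Fin n) : p ∈ combRaw c B (p :: rest) := by
  rw [combRaw]
  split
  · assumption
  · exact mem_insert_self _ _

/-- cost of the first `t` steps. -/
def xcost (A : DetAlg k n) (σ : List (Fin n)) (t : ℕ) : ℕ :=
  ∑ s ∈ Finset.range t, (detConfAt A σ (s + 1) \ detConfAt A σ s).card

lemma detConfAt_take (A : DetAlg k n) (σ : List (Fin n)) {s t : ℕ} (h : s ≤ t) :
    detConfAt A (σ.take t) s = detConfAt A σ s := by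
  unfold detConfAt
  split
  · rfl
  · rw [List.take_take, min_eq_left h]

lemma detCost_take (A : DetAlg k n) (σ : List (Fin n)) {t : ℕ} (h : t ≤ σ.length) :
    detCost A (σ.take t) = xcost A σ t := by
  unfold detCost xcost
  rw [List.length_take, min_eq_left h]
  refine Finset.sum_congr rfl fun s hs => ?_
  rw [mem_range] at hs
  rw [detConfAt_take A σ (by omega : s + 1 ≤ t), detConfAt_take A σ (by omega : s ≤ t)]

lemma xcost_eq (A : DetAlg k n) (σ : List (Fin n)) : xcost A σ σ.length = detCost A σ := rfl

lemma detConfAt_card (A : DetAlg k n) (σ : List (Fin n)) (t : ℕ) (hkn : k ≤ n) :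
    (detConfAt A σ t).card = k := by
  unfold detConfAt
  split
  · exact initConf_card hkn
  · exact A.card_eq _

lemma xcost_succ (A : DetAlg k n) (σ : List (Fin n)) (t : ℕ) :
    xcost A σ (t + 1) = xcost A σ t + (detConfAt A σ (t + 1) \ detConfAt A σ t).card :=
  Finset.sum_range_succ _ t

/-- configuration of the combined algorithm after `t` steps. -/
noncomputable def combC (c : Fin m → ℝ) (B : Fin m → DetAlg k n)
    (σ : List (Fin n)) (t : ℕ) : Finset (Fin n) :=
  combRaw c B ((σ.take t).reverse)

lemma combC_card (c : Fin m → ℝ) (B : Fin m → DetAlg k n) (σ : List (Fin n)) (t : ℕ)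
    (hk : 1 ≤ k) (hkn : k ≤ n) : (combC c B σ t).card = k :=
  combRaw_card c B hk hkn _

lemma take_succ_eq (σ : List (Fin n)) {t : ℕ} (ht : t < σ.length) :
    σ.take (t + 1) = σ.take t ++ [σ.get ⟨t, ht⟩] := by
  rw [← List.take_concat_get ht, List.concat_eq_append]
  rfl

/-- step dichotomy for the combined algorithm. -/
lemma combC_succ (c : Fin m → ℝ) (B : Fin m → DetAlg k n) (σ : List (Fin n))
    {t : ℕ} (ht : t < σ.length) (hm : 0 < m) (hk : 1 ≤ k) (hkn : k ≤ n) :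
    (σ.get ⟨t, ht⟩ ∈ combC c B σ t ∧ combC c B σ (t + 1) = combC c B σ t) ∨
    (σ.get ⟨t, ht⟩ ∉ combC c B σ t ∧ ∃ q, q ∈ combC c B σ t ∧
      q ∉ (B (combPick c B (σ.take (t + 1)) hm)).conf (σ.take (t + 1)) ∧
      combC c B σ (t + 1) = insert (σ.get ⟨t, ht⟩) ((combC c B σ t).erase q)) := by
  set p := σ.get ⟨t, ht⟩ with hp
  have h1 : (σ.take (t + 1)).reverse = p :: (σ.take t).reverse := by
    rw [take_succ_eq σ ht, List.reverse_append, List.reverse_singleton]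
    rfl
  have h2 : combC c B σ (t + 1) = combRaw c B (p :: (σ.take t).reverse) := by
    rw [combC, h1]
  rw [combRaw] at h2
  have hl : ((p :: (σ.take t).reverse).reverse) = σ.take (t + 1) := by
    rw [← h1, List.reverse_reverse]
  rw [hl] at h2
  by_cases hmem : p ∈ combC c B σ t
  · left
    refine ⟨hmem, ?_⟩
    rw [h2, if_pos (show p ∈ combRaw c B ((σ.take t).reverse) from hmem)]
    rfl
  · right
    refine ⟨hmem, ?_⟩
    have hcomb : combC c B σ (t + 1) = insert p ((combC c B σ t).erase
        (combVictim c B (combC c B σ t) (σ.take (t + 1)) p)) := by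
      rw [h2, if_neg (show p ∉ combRaw c B ((σ.take t).reverse) from hmem)]
      rfl
    refine ⟨combVictim c B (combC c B σ t) (σ.take (t + 1)) p, ?_, ?_, hcomb⟩
    · refine combVictim_mem c B _ _ _ (by
        rw [← card_pos, combC_card c B σ t hk hkn]; omega)
    · refine combVictim_not_mem c B _ _ _ hm (combC_card c B σ t hk hkn) hmem ?_
      rw [take_succ_eq σ ht]
      exact (B _).mem_last _ _

lemma card_sdiff_triangle {α : Type*} [DecidableEq α] (C D D' : Finset α) :
    (C \ D').card ≤ (C \ D).card + (D \ D').card := by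
  have hsub : C \ D' ⊆ (C \ D) ∪ (D \ D') := by
    intro x hx
    rw [mem_sdiff] at hx
    by_cases hxD : x ∈ D
    · exact mem_union_right _ (mem_sdiff.mpr ⟨hxD, hx.2⟩)
    · exact mem_union_left _ (mem_sdiff.mpr ⟨hx.1, hxD⟩)
  exact le_trans (card_le_card hsub) (card_union_le _ _)

lemma fault_diff_card {α : Type*} [DecidableEq α] (C : Finset α) (p q : α) (hp : p ∉ C) :
    (insert p (C.erase q) \ C).card = 1 := by
  have : insert p (C.erase q) \ C = {p} := by
    ext x
    simp only [mem_sdiff, mem_insert, mem_erase, mem_singleton]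
    constructor
    · rintro ⟨h1 | h2, hxC⟩
      · exact h1
      · exact absurd h2.2 hxC
    · rintro rfl; exact ⟨Or.inl rfl, hp⟩
  rw [this, card_singleton]

lemma fault_sub {α : Type*} [DecidableEq α] (C D : Finset α) (p q : α) (hpD : p ∈ D) :
    insert p (C.erase q) \ D ⊆ C \ D := by
  intro x hx
  rw [mem_sdiff] at hx ⊢
  rcases mem_insert.mp hx.1 with h | h
  · exact absurd (h ▸ hpD) hx.2
  · exact ⟨mem_of_mem_erase h, hx.2⟩

lemma fault_picked_card {α : Type*} [DecidableEq α] (C D : Finset α) (p q : α)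
    (hpD : p ∈ D) (hqC : q ∈ C) (hqD : q ∉ D) :
    (insert p (C.erase q) \ D).card + 1 = (C \ D).card := by
  have h1 : insert p (C.erase q) \ D = (C \ D).erase q := by
    rw [insert_sdiff_of_mem _ hpD]
    ext x
    simp only [mem_sdiff, mem_erase]
    tauto
  rw [h1, card_erase_of_mem (mem_sdiff.mpr ⟨hqC, hqD⟩)]
  have : 0 < (C \ D).card := card_pos.mpr ⟨q, mem_sdiff.mpr ⟨hqC, hqD⟩⟩
  omega

/-- number of faults of the combined algorithm charged to index `i`. -/
noncomputable def combF (c : Fin m → ℝ) (B : Fin m → DetAlg k n) (hm : 0 < m)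
    (σ : List (Fin n)) (i : Fin m) (t : ℕ) : ℕ :=
  ∑ s ∈ Finset.range t, if combPick c B (σ.take (s + 1)) hm = i
    then (combC c B σ (s + 1) \ combC c B σ s).card else 0

lemma combF_le (c : Fin m → ℝ) (B : Fin m → DetAlg k n) (hm : 0 < m)
    (σ : List (Fin n)) (i : Fin m) (hk : 1 ≤ k) (hkn : k ≤ n) :
    ∀ t, t ≤ σ.length →
      (combC c B σ t \ detConfAt (B i) σ t).card + combF c B hm σ i t
        ≤ xcost (B i) σ t := by
  intro t
  induction t with
  | zero =>
    intro _
    simp [combF, xcost, combC, combRaw, detConfAt]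
  | succ t ih =>
    intro hlen
    have ht : t < σ.length := by omega
    have IH := ih (by omega)
    have hΔ : (detConfAt (B i) σ t \ detConfAt (B i) σ (t + 1)).card
        = (detConfAt (B i) σ (t + 1) \ detConfAt (B i) σ t).card :=
      card_sdiff_comm (by rw [detConfAt_card _ _ _ hkn, detConfAt_card _ _ _ hkn])
    have hx := xcost_succ (B i) σ t
    have hF : combF c B hm σ i (t + 1) = combF c B hm σ i t +
        (if combPick c B (σ.take (t + 1)) hm = i
          then (combC c B σ (t + 1) \ combC c B σ t).card else 0) :=
      Finset.sum_range_succ _ t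
    have htri := card_sdiff_triangle (combC c B σ t) (detConfAt (B i) σ t)
      (detConfAt (B i) σ (t + 1))
    have hD1 : detConfAt (B i) σ (t + 1) = (B i).conf (σ.take (t + 1)) :=
      if_neg (Nat.succ_ne_zero t)
    have hpD : σ.get ⟨t, ht⟩ ∈ detConfAt (B i) σ (t + 1) := by
      rw [hD1, take_succ_eq σ ht]
      exact (B i).mem_last _ _
    rcases combC_succ c B σ ht hm hk hkn with ⟨hmem, heq⟩ | ⟨hmem, q, hqC, hqD, heq⟩
    · -- no fault
      rw [heq] at hF
      simp only [sdiff_self, Finset.bot_eq_empty, card_empty, ite_self] at hF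
      rw [heq]
      omega
    · -- fault
      have hfcard : (combC c B σ (t + 1) \ combC c B σ t).card = 1 := by
        rw [heq]; exact fault_diff_card _ _ _ hmem
      by_cases hpick : combPick c B (σ.take (t + 1)) hm = i
      · have hqD' : q ∉ detConfAt (B i) σ (t + 1) := by
          rw [hD1, ← hpick]; exact hqD
        have hφ : (combC c B σ (t + 1) \ detConfAt (B i) σ (t + 1)).card + 1
            = (combC c B σ t \ detConfAt (B i) σ (t + 1)).card := by
          rw [heq]
          exact fault_picked_card _ _ _ _ hpD hqC hqD'
        rw [if_pos hpick, hfcard] at hF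
        omega
      · rw [if_neg hpick] at hF
        have hφ : (combC c B σ (t + 1) \ detConfAt (B i) σ (t + 1)).card
            ≤ (combC c B σ t \ detConfAt (B i) σ (t + 1)).card := by
          rw [heq]
          exact card_le_card (fault_sub _ _ _ _ hpD)
        omega

lemma combF_key (c : Fin m → ℝ) (B : Fin m → DetAlg k n) (hm : 0 < m)
    (σ : List (Fin n)) (i : Fin m) (hk : 1 ≤ k) (hkn : k ≤ n) (hc : ∀ i, 0 < c i) :
    ∀ t, t ≤ σ.length → ∀ j,
      c i * (combF c B hm σ i t : ℝ) ≤ c j * (xcost (B j) σ t : ℝ) := by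
  intro t
  induction t with
  | zero =>
    intro _ j
    simp only [combF, Finset.range_zero, Finset.sum_empty, Nat.cast_zero, mul_zero]
    exact mul_nonneg (hc j).le (Nat.cast_nonneg _)
  | succ t ih =>
    intro hlen j
    have ht : t < σ.length := by omega
    have hF : combF c B hm σ i (t + 1) = combF c B hm σ i t +
        (if combPick c B (σ.take (t + 1)) hm = i
          then (combC c B σ (t + 1) \ combC c B σ t).card else 0) :=
      Finset.sum_range_succ _ t
    by_cases hpick : combPick c B (σ.take (t + 1)) hm = i
    · have h1 : combF c B hm σ i (t + 1) ≤ xcost (B i) σ (t + 1) := by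
        have := combF_le c B hm σ i hk hkn (t + 1) hlen
        omega
      have h2 : c i * (combF c B hm σ i (t + 1) : ℝ)
          ≤ c i * (xcost (B i) σ (t + 1) : ℝ) :=
        mul_le_mul_of_nonneg_left (by exact_mod_cast h1) (hc i).le
      refine h2.trans ?_
      have h3 := combPick_min c B (σ.take (t + 1)) hm j
      rw [hpick] at h3
      rwa [detCost_take (B i) σ hlen, detCost_take (B j) σ hlen] at h3
    · rw [hF, if_neg hpick, add_zero]
      refine (ih (by omega) j).trans ?_
      have : xcost (B j) σ t ≤ xcost (B j) σ (t + 1) := by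
        rw [xcost_succ]; omega
      exact mul_le_mul_of_nonneg_left (by exact_mod_cast this) (hc j).le


/-- Sufficiency: if `Σ 1/c(i) ≤ 1` then there is an online algorithm that is
`c(i)`-competitive against `B(i)` simultaneously for all `i`. -/
theorem combine_online_algorithms (m k n : ℕ) (hk : 1 ≤ k) (hkn : k < n)
    (c : Fin m → ℝ) (hc : ∀ i, 0 < c i) (hsum : ∑ i, 1 / c i ≤ 1)
    (B : Fin m → DetAlg k n) :
    ∃ A : DetAlg k n, ∀ i : Fin m, ∃ a : ℝ, ∀ σ : List (Fin n),
      (detCost A σ : ℝ) ≤ c i * (detCost (B i) σ : ℝ) + a := by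
  have hkn' : k ≤ n := hkn.le
  refine ⟨⟨fun l => combRaw c B l.reverse,
      fun l => combRaw_card c B hk hkn' _,
      fun l r => by
        show r ∈ combRaw c B (l ++ [r]).reverse
        have h : (l ++ [r]).reverse = r :: l.reverse := by simp
        rw [h]
        exact combRaw_mem c B _ r⟩, ?_⟩
  intro i
  have hm : 0 < m := i.pos
  refine ⟨0, fun σ => ?_⟩
  set A : DetAlg k n := ⟨fun l => combRaw c B l.reverse,
      fun l => combRaw_card c B hk hkn' _,
      fun l r => by
        show r ∈ combRaw c B (l ++ [r]).reverse
        have h : (l ++ [r]).reverse = r :: l.reverse := by simp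
        rw [h]
        exact combRaw_mem c B _ r⟩ with hA
  have hCA : ∀ t, detConfAt A σ t = combC c B σ t := by
    intro t
    unfold detConfAt combC
    split
    · next h => subst h; simp only [List.take_zero, List.reverse_nil]; rw [combRaw]
    · rfl
  have hPsum : detCost A σ = ∑ j : Fin m, combF c B hm σ j σ.length := by
    unfold detCost combF
    rw [Finset.sum_comm]
    refine Finset.sum_congr rfl fun t _ => ?_
    rw [hCA, hCA]
    rw [Finset.sum_ite_eq Finset.univ (combPick c B (σ.take (t + 1)) hm)
      (fun _ => (combC c B σ (t + 1) \ combC c B σ t).card),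
      if_pos (Finset.mem_univ _)]
  have hK : (0:ℝ) ≤ c i * (detCost (B i) σ : ℝ) :=
    mul_nonneg (hc i).le (Nat.cast_nonneg _)
  have hterm : ∀ j : Fin m, (combF c B hm σ j σ.length : ℝ)
      ≤ (1 / c j) * (c i * (detCost (B i) σ : ℝ)) := by
    intro j
    have h1 := combF_key c B hm σ j hk hkn' hc σ.length le_rfl i
    rw [xcost_eq] at h1
    rw [show (1:ℝ) / c j * (c i * (detCost (B i) σ : ℝ))
        = (c i * (detCost (B i) σ : ℝ)) / c j by ring,
      le_div_iff₀ (hc j), mul_comm]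
    exact h1
  calc (detCost A σ : ℝ) = ∑ j : Fin m, (combF c B hm σ j σ.length : ℝ) := by
        rw [hPsum]; push_cast; rfl
    _ ≤ ∑ j : Fin m, (1 / c j) * (c i * (detCost (B i) σ : ℝ)) :=
        Finset.sum_le_sum fun j _ => hterm j
    _ = (∑ j : Fin m, 1 / c j) * (c i * (detCost (B i) σ : ℝ)) := by
        rw [Finset.sum_mul]
    _ ≤ 1 * (c i * (detCost (B i) σ : ℝ)) := mul_le_mul_of_nonneg_right hsum hK
    _ = c i * (detCost (B i) σ : ℝ) + 0 := by ring
end
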